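/- (I − S) M⁻¹ = M⁻¹ (I − Sᵀ) = M_c⁻¹ P (the pseudoinverse of P M P). -/

import Mathlib

open Matrix

lemma Mc_posDef {n : ℕ} (M P : Matrix (Fin n) (Fin n) ℝ) (hM : M.PosDef)
    (hP : P * P = P) (hPt : Pᵀ = P) (ν : ℝ) (hν : 0 < ν) :
    (P * M * P + ν • (1 - P)).PosDef := by
  have hMt : Mᵀ = M := hM.isHermitian
  have hQ : (1 - P) * (1 - P) = 1 - P := by
    rw [Matrix.sub_mul, Matrix.mul_sub, Matrix.mul_sub, Matrix.one_mul, Matrix.mul_one,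
      Matrix.one_mul, hP]
    abel
  have hQt : (1 - P)ᵀ = 1 - P := by rw [transpose_sub, transpose_one, hPt]
  refine posDef_iff_dotProduct_mulVec.mpr ⟨?_, ?_⟩
  · show _ᴴ = _
    rw [Matrix.conjTranspose_eq_transpose_of_trivial, transpose_add, transpose_smul,
      transpose_mul, transpose_mul, hPt, hMt, hQt, ← Matrix.mul_assoc]
  · intro x hx
    have hsx : star x = x := by simp
    set y := P *ᵥ x with hy
    set z := (1 - P) *ᵥ x with hz
    have hterm1 : x ⬝ᵥ ((P * M * P) *ᵥ x) = y ⬝ᵥ (M *ᵥ y) := by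
      rw [← Matrix.mulVec_mulVec, ← Matrix.mulVec_mulVec, Matrix.dotProduct_mulVec,
        ← Matrix.mulVec_transpose, hPt, ← hy]
    have hterm2 : x ⬝ᵥ ((1 - P) *ᵥ x) = z ⬝ᵥ z := by
      conv_lhs => rw [← hQ]
      rw [← Matrix.mulVec_mulVec, Matrix.dotProduct_mulVec, ← Matrix.mulVec_transpose, hQt]
    have hexpand : x ⬝ᵥ ((P * M * P + ν • (1 - P)) *ᵥ x)
        = y ⬝ᵥ (M *ᵥ y) + ν * (z ⬝ᵥ z) := by
      rw [Matrix.add_mulVec, dotProduct_add, hterm1, Matrix.smul_mulVec,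
        dotProduct_smul, hterm2, smul_eq_mul]
    rw [hsx, hexpand]
    have hzz : 0 ≤ z ⬝ᵥ z := Finset.sum_nonneg fun i _ => mul_self_nonneg (z i)
    by_cases hy0 : y = 0
    · have hzx : z = x := by
        rw [hz, Matrix.sub_mulVec, Matrix.one_mulVec, ← hy, hy0, sub_zero]
      have : 0 < z ⬝ᵥ z := by
        rcases lt_or_eq_of_le hzz with h | h
        · exact h
        · exact absurd (dotProduct_self_eq_zero.mp h.symm) (hzx ▸ hx)
      have h1 : y ⬝ᵥ (M *ᵥ y) = 0 := by rw [hy0]; simp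
      rw [h1, zero_add]
      exact mul_pos hν this
    · have h1 : 0 < y ⬝ᵥ (M *ᵥ y) := by
        have := hM.dotProduct_mulVec_pos hy0
        rwa [show star y = y by simp] at this
      have h2 : 0 ≤ ν * (z ⬝ᵥ z) := mul_nonneg hν.le hzz
      linarith

theorem I_sub_S_mul_Minv {n : ℕ}
    (M P : Matrix (Fin n) (Fin n) ℝ) (hM : M.PosDef)
    (hP : P * P = P) (hPt : Pᵀ = P) (ν : ℝ) (hν : 0 < ν)
    (Mc S : Matrix (Fin n) (Fin n) ℝ)
    (hMc : Mc = P * M * P + ν • (1 - P)) (hS : S = 1 - Mc⁻¹ * P * M) :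
    (1 - S) * M⁻¹ = M⁻¹ * (1 - Sᵀ) ∧ M⁻¹ * (1 - Sᵀ) = Mc⁻¹ * P := by
  have hMcpd : Mc.PosDef := hMc ▸ Mc_posDef M P hM hP hPt ν hν
  have hMu : IsUnit M := hM.isUnit
  have hMcu : IsUnit Mc := hMcpd.isUnit
  have hMct : Mcᵀ = Mc := hMcpd.isHermitian
  have hMt : Mᵀ = M := hM.isHermitian
  have hd : IsUnit Mc.det := (Matrix.isUnit_iff_isUnit_det _).mp hMcu
  have hdM : IsUnit M.det := (Matrix.isUnit_iff_isUnit_det _).mp hMu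
  have hcomm : P * Mc = Mc * P := by
    have e1 : P * (P * M * P) = P * M * P := by
      rw [← Matrix.mul_assoc, ← Matrix.mul_assoc, hP]
    have e2 : P * M * P * P = P * M * P := by
      rw [Matrix.mul_assoc, Matrix.mul_assoc, hP, ← Matrix.mul_assoc]
    rw [hMc, Matrix.mul_add, Matrix.add_mul, Matrix.mul_smul, Matrix.smul_mul,
      Matrix.mul_sub, Matrix.sub_mul, Matrix.mul_one, Matrix.one_mul, e1, e2, hP]
  have hcommInv : P * Mc⁻¹ = Mc⁻¹ * P := by
    calc P * Mc⁻¹ = Mc⁻¹ * (Mc * P) * Mc⁻¹ := by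
          rw [← Matrix.mul_assoc Mc⁻¹ Mc P, Matrix.nonsing_inv_mul _ hd, Matrix.one_mul]
      _ = Mc⁻¹ * (P * Mc) * Mc⁻¹ := by rw [hcomm]
      _ = Mc⁻¹ * P := by
          rw [← Matrix.mul_assoc Mc⁻¹ P Mc, Matrix.mul_assoc (Mc⁻¹ * P) Mc Mc⁻¹,
            Matrix.mul_nonsing_inv _ hd, Matrix.mul_one]
  have hMcinvT : Mc⁻¹ᵀ = Mc⁻¹ := by rw [Matrix.transpose_nonsing_inv, hMct]
  have h1S : 1 - S = Mc⁻¹ * P * M := by rw [hS, sub_sub_cancel]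
  have h1St : 1 - Sᵀ = M * P * Mc⁻¹ := by
    have : Sᵀ = 1 - Mᵀ * Pᵀ * Mc⁻¹ᵀ := by
      rw [hS]; simp [transpose_sub, transpose_mul, Matrix.mul_assoc]
    rw [this, hMt, hPt, hMcinvT, sub_sub_cancel]
  constructor
  · rw [h1S, h1St, Matrix.mul_assoc, Matrix.mul_nonsing_inv _ hdM, Matrix.mul_one,
      ← Matrix.mul_assoc, ← Matrix.mul_assoc, Matrix.nonsing_inv_mul _ hdM, Matrix.one_mul,
      hcommInv]
  · rw [h1St, ← Matrix.mul_assoc, ← Matrix.mul_assoc, Matrix.nonsing_inv_mul _ hdM,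
      Matrix.one_mul, hcommInv]
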